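/- (Theorem 1: G-twirling decomposes as decoherence-full on gauge subsystems and identity on multiplicity subsystems.) Define the G-twirling operation 𝒢[A] = |G|⁻¹ ∑_{g∈G} T(g) A T(g)† on linear operators A on H. Then for every linear operator A on H, Φ 𝒢[A] Φ⁻¹ = ⊕_{q∈Q} (I_{M_q}/dim M_q) ⊗ Tr_{M_q}[(Φ A Φ⁻¹)_{qq}], where (Φ A Φ⁻¹)_{qq} = P_q (Φ A Φ⁻¹) P_q is the q-th diagonal block (P_q the orthogonal projection onto the summand M_q ⊗ N_q) and Tr_{M_q} denotes the partial trace over M_q, i.e., the unique linear map on operators on M_q ⊗ N_q satisfying Tr_{M_q}[B ⊗ C] = (Tr B)·C. In particular, all off-diagonal blocks of Φ 𝒢[A] Φ⁻¹ between distinct sectors q ≠ q' vanish. -/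

import Mathlib

/-!
STATEMENT 5 (Theorem 1): G-twirling decomposes as the completely depolarizing map on
the gauge (irrep) subsystems M_q and the identity on the multiplicity subsystems N_q.
With a finite group G, a unitary representation T on H, and a unitary isomorphism
Φ : H ≅ ⊕_{q∈Q} M_q ⊗ N_q intertwining T with ⊕_q T_q ⊗ I (T_q pairwise
non-isomorphic irreducible unitary representations), the G-twirl
𝒢[A] = |G|⁻¹ ∑_g T(g) A T(g)† satisfies
Φ 𝒢[A] Φ⁻¹ = ⊕_q (I_{M_q}/dim M_q) ⊗ Tr_{M_q}[(Φ A Φ⁻¹)_{qq}],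
where Tr_{M_q} is the partial trace (the unique linear map with
Tr_{M_q}[B ⊗ C] = (Tr B)·C) and (Φ A Φ⁻¹)_{qq} is the q-th diagonal block.
In particular all off-diagonal blocks of Φ 𝒢[A] Φ⁻¹ vanish (the right-hand side at
sector q depends only on the q-th component of the input vector).
Since T is unitary, T(g)† = T(g⁻¹).
-/

open scoped TensorProduct
open TensorProduct

/-- Schur's lemma, zero form: a nonzero intertwiner between irreducible reps
would be an isomorphism; if no isomorphism exists, every intertwiner is zero. -/
lemma my_schur_zero {V W : Type*} [AddCommGroup V] [Module ℂ V] [AddCommGroup W] [Module ℂ W]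
    {G : Type*} [Group G] (S : G →* (V →ₗ[ℂ] V)) (S' : G →* (W →ₗ[ℂ] W))
    (hS : ∀ (U : Submodule ℂ V), (∀ g, ∀ x ∈ U, S g x ∈ U) → U = ⊥ ∨ U = ⊤)
    (hS' : ∀ (U : Submodule ℂ W), (∀ g, ∀ x ∈ U, S' g x ∈ U) → U = ⊥ ∨ U = ⊤)
    (hno : ¬ ∃ e : W ≃ₗ[ℂ] V, ∀ g x, e (S' g x) = S g (e x))
    (f : W →ₗ[ℂ] V) (hf : ∀ g (x : W), f (S' g x) = S g (f x)) : f = 0 := by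
  by_contra hf0
  have hker : LinearMap.ker f = ⊥ := by
    rcases hS' (LinearMap.ker f) (fun g x hx => by
      simp only [LinearMap.mem_ker] at hx ⊢
      rw [hf, hx, map_zero]) with h | h
    · exact h
    · exact absurd (LinearMap.ker_eq_top.mp h) hf0
  have hrange : LinearMap.range f = ⊤ := by
    rcases hS (LinearMap.range f) (fun g x hx => by
      obtain ⟨y, rfl⟩ := hx
      exact ⟨S' g y, hf g y⟩) with h | h
    · exact absurd (LinearMap.range_eq_bot.mp h) hf0
    · exact h
  exact hno ⟨LinearEquiv.ofBijective f
      ⟨LinearMap.ker_eq_bot.mp hker, LinearMap.range_eq_top.mp hrange⟩,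
    fun g x => hf g x⟩

/-- Schur's lemma, scalar form with trace normalization. -/
lemma my_schur_scalar {V : Type*} [AddCommGroup V] [Module ℂ V] [FiniteDimensional ℂ V]
    [Nontrivial V] {G : Type*} [Group G] (S : G →* (V →ₗ[ℂ] V))
    (hS : ∀ (U : Submodule ℂ V), (∀ g, ∀ x ∈ U, S g x ∈ U) → U = ⊥ ∨ U = ⊤)
    (f : V →ₗ[ℂ] V) (hf : ∀ g (x : V), f (S g x) = S g (f x)) :
    f = ((Module.finrank ℂ V : ℂ))⁻¹ • (LinearMap.trace ℂ V f) • LinearMap.id := by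
  obtain ⟨c, hc⟩ := Module.End.exists_eigenvalue (f : Module.End ℂ V)
  have hscal : f = c • LinearMap.id := by
    have hinv : ∀ g, ∀ x ∈ LinearMap.ker (f - c • LinearMap.id), S g x ∈ LinearMap.ker (f - c • LinearMap.id) := by
      intro g x hx
      simp only [LinearMap.mem_ker, LinearMap.sub_apply, LinearMap.smul_apply,
        LinearMap.id_apply] at hx ⊢
      rw [hf, ← map_smul, ← map_sub, hx, map_zero]
    rcases hS _ hinv with h | h
    · exfalso
      obtain ⟨x, hx⟩ := hc.exists_hasEigenvector
      have hx0 : x ∈ LinearMap.ker (f - c • LinearMap.id) := by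
        simp only [LinearMap.mem_ker, LinearMap.sub_apply, LinearMap.smul_apply,
          LinearMap.id_apply, sub_eq_zero]
        exact hx.apply_eq_smul
      rw [h, Submodule.mem_bot] at hx0
      exact hx.right hx0
    · ext x
      have : x ∈ LinearMap.ker (f - c • LinearMap.id) := h ▸ Submodule.mem_top
      simpa [sub_eq_zero] using this
  have hd : (Module.finrank ℂ V : ℂ) ≠ 0 := by
    have := Module.finrank_pos (R := ℂ) (M := V)
    exact_mod_cast this.ne'
  rw [hscal]
  have : LinearMap.trace ℂ V (c • LinearMap.id) = c * (Module.finrank ℂ V : ℂ) := by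
    simp [LinearMap.trace_id, mul_comm]
  rw [this, smul_smul]
  congr 1
  field_simp
open scoped TensorProduct
open TensorProduct

lemma my_avg_intertwine {G : Type*} [Group G] [Fintype G] {V V' : Type*}
    [AddCommGroup V] [Module ℂ V] [AddCommGroup V'] [Module ℂ V']
    (Tq : G →* (V →ₗ[ℂ] V)) (Tq' : G →* (V' →ₗ[ℂ] V')) (f : V' →ₗ[ℂ] V) (g₀ : G) (x : V') :
    (∑ g : G, Tq g ∘ₗ f ∘ₗ Tq' g⁻¹) (Tq' g₀ x) = Tq g₀ ((∑ g : G, Tq g ∘ₗ f ∘ₗ Tq' g⁻¹) x) := by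
  simp only [LinearMap.sum_apply, map_sum, LinearMap.comp_apply]
  refine Fintype.sum_equiv (Equiv.mulLeft g₀⁻¹) _ _ (fun g => ?_)
  simp only [Equiv.coe_mulLeft, ← Module.End.mul_apply, ← map_mul]
  congr 2
  group

lemma my_subsingleton_tensor {V W : Type*} [AddCommGroup V] [Module ℂ V]
    [AddCommGroup W] [Module ℂ W] [Subsingleton V] : Subsingleton (V ⊗[ℂ] W) := by
  constructor
  have h : ∀ x : V ⊗[ℂ] W, x = 0 := by
    intro x
    induction x using TensorProduct.induction_on with
    | zero => rfl
    | tmul m n => rw [Subsingleton.elim m 0, TensorProduct.zero_tmul]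
    | add a b ha hb => rw [ha, hb, add_zero]
  intro a b; rw [h a, h b]

lemma my_twirl_ne {G : Type*} [Group G] [Fintype G] {V W V' W' : Type*}
    [AddCommGroup V] [Module ℂ V] [FiniteDimensional ℂ V]
    [AddCommGroup W] [Module ℂ W] [FiniteDimensional ℂ W]
    [AddCommGroup V'] [Module ℂ V'] [FiniteDimensional ℂ V']
    [AddCommGroup W'] [Module ℂ W'] [FiniteDimensional ℂ W']
    (Tq : G →* (V →ₗ[ℂ] V)) (Tq' : G →* (V' →ₗ[ℂ] V'))
    (hirr : ∀ (U : Submodule ℂ V), (∀ g, ∀ x ∈ U, Tq g x ∈ U) → U = ⊥ ∨ U = ⊤)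
    (hirr' : ∀ (U : Submodule ℂ V'), (∀ g, ∀ x ∈ U, Tq' g x ∈ U) → U = ⊥ ∨ U = ⊤)
    (hno : ¬ ∃ e : V' ≃ₗ[ℂ] V, ∀ g x, e (Tq' g x) = Tq g (e x))
    (S : (V' ⊗[ℂ] W') →ₗ[ℂ] (V ⊗[ℂ] W)) :
    ∑ g : G, TensorProduct.map (Tq g) LinearMap.id ∘ₗ S ∘ₗ
      TensorProduct.map (Tq' g⁻¹) LinearMap.id = 0 := by
  have key : ∀ t : (V' →ₗ[ℂ] V) ⊗[ℂ] (W' →ₗ[ℂ] W),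
      ∑ g : G, TensorProduct.map (Tq g) LinearMap.id ∘ₗ
          (homTensorHomEquiv ℂ V' W' V W t) ∘ₗ
          TensorProduct.map (Tq' g⁻¹) LinearMap.id = 0 := by
    intro t
    induction t using TensorProduct.induction_on with
    | zero => simp
    | tmul f h =>
      have hmap : ∀ g : G, TensorProduct.map (Tq g) LinearMap.id ∘ₗ
          (TensorProduct.map f h) ∘ₗ TensorProduct.map (Tq' g⁻¹) LinearMap.id
            = TensorProduct.map (Tq g ∘ₗ f ∘ₗ Tq' g⁻¹) h := by
        intro g
        rw [← TensorProduct.map_comp, ← TensorProduct.map_comp,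
          LinearMap.id_comp, LinearMap.comp_id]
      have hΨ : homTensorHomEquiv ℂ V' W' V W (f ⊗ₜ[ℂ] h) = TensorProduct.map f h := by
        rw [homTensorHomEquiv_apply, TensorProduct.homTensorHomMap_apply]
      rw [hΨ]
      simp only [hmap]
      have hsum : ∑ g : G, TensorProduct.map (Tq g ∘ₗ f ∘ₗ Tq' g⁻¹) h
          = TensorProduct.map (∑ g : G, Tq g ∘ₗ f ∘ₗ Tq' g⁻¹) h := by
        simp only [← TensorProduct.mapBilinear_apply]
        exact (map_sum ((TensorProduct.mapBilinear (RingHom.id ℂ) V' W' V W).flip h) _ _).symm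
      rw [hsum]
      have hE : (∑ g : G, Tq g ∘ₗ f ∘ₗ Tq' g⁻¹) = 0 :=
        my_schur_zero Tq Tq' hirr hirr' hno _ (fun g x => my_avg_intertwine Tq Tq' f g x)
      rw [hE]
      ext x
      simp
    | add x y hx hy =>
      simp only [map_add, LinearMap.comp_add, LinearMap.add_comp, Finset.sum_add_distrib,
        hx, hy, add_zero]
  have := key ((homTensorHomEquiv ℂ V' W' V W).symm S)
  rwa [LinearEquiv.apply_symm_apply] at this

lemma my_twirl_eq {G : Type*} [Group G] [Fintype G] {V W : Type*}
    [AddCommGroup V] [Module ℂ V] [FiniteDimensional ℂ V]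
    [AddCommGroup W] [Module ℂ W] [FiniteDimensional ℂ W]
    (Tq : G →* (V →ₗ[ℂ] V))
    (hirr : ∀ (U : Submodule ℂ V), (∀ g, ∀ x ∈ U, Tq g x ∈ U) → U = ⊥ ∨ U = ⊤)
    (ptr : ((V ⊗[ℂ] W) →ₗ[ℂ] (V ⊗[ℂ] W)) →ₗ[ℂ] (W →ₗ[ℂ] W))
    (hptr : ∀ (B : V →ₗ[ℂ] V) (C : W →ₗ[ℂ] W),
      ptr (TensorProduct.map B C) = (LinearMap.trace ℂ V B) • C)
    (S : (V ⊗[ℂ] W) →ₗ[ℂ] (V ⊗[ℂ] W)) :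
    ∑ g : G, TensorProduct.map (Tq g) LinearMap.id ∘ₗ S ∘ₗ
        TensorProduct.map (Tq g⁻¹) LinearMap.id
      = (Fintype.card G : ℂ) • ((Module.finrank ℂ V : ℂ))⁻¹ •
          TensorProduct.map LinearMap.id (ptr S) := by
  rcases subsingleton_or_nontrivial V with hV | hV
  · haveI := my_subsingleton_tensor (V := V) (W := W)
    exact Subsingleton.elim _ _
  have hcard : ((Fintype.card G : ℂ)) ≠ 0 := by
    exact_mod_cast Nat.cast_ne_zero.mpr Fintype.card_ne_zero
  have key : ∀ t : (V →ₗ[ℂ] V) ⊗[ℂ] (W →ₗ[ℂ] W),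
      ∑ g : G, TensorProduct.map (Tq g) LinearMap.id ∘ₗ
          (homTensorHomEquiv ℂ V W V W t) ∘ₗ
          TensorProduct.map (Tq g⁻¹) LinearMap.id
        = (Fintype.card G : ℂ) • ((Module.finrank ℂ V : ℂ))⁻¹ •
            TensorProduct.map LinearMap.id (ptr (homTensorHomEquiv ℂ V W V W t)) := by
    intro t
    induction t using TensorProduct.induction_on with
    | zero => simp
    | tmul f h =>
      have hΨ : homTensorHomEquiv ℂ V W V W (f ⊗ₜ[ℂ] h) = TensorProduct.map f h := by
        rw [homTensorHomEquiv_apply, TensorProduct.homTensorHomMap_apply]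
      rw [hΨ]
      have hmap : ∀ g : G, TensorProduct.map (Tq g) LinearMap.id ∘ₗ
          (TensorProduct.map f h) ∘ₗ TensorProduct.map (Tq g⁻¹) LinearMap.id
            = TensorProduct.map (Tq g ∘ₗ f ∘ₗ Tq g⁻¹) h := by
        intro g
        rw [← TensorProduct.map_comp, ← TensorProduct.map_comp,
          LinearMap.id_comp, LinearMap.comp_id]
      simp only [hmap]
      have hsum : ∑ g : G, TensorProduct.map (Tq g ∘ₗ f ∘ₗ Tq g⁻¹) h
          = TensorProduct.map (∑ g : G, Tq g ∘ₗ f ∘ₗ Tq g⁻¹) h := by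
        simp only [← TensorProduct.mapBilinear_apply]
        exact (map_sum ((TensorProduct.mapBilinear (RingHom.id ℂ) V W V W).flip h) _ _).symm
      rw [hsum]
      -- the averaged operator is a scalar
      set E := ∑ g : G, Tq g ∘ₗ f ∘ₗ Tq g⁻¹ with hEdef
      have hEscal : E = ((Module.finrank ℂ V : ℂ))⁻¹ • (LinearMap.trace ℂ V E) •
          LinearMap.id :=
        my_schur_scalar Tq hirr E (fun g x => my_avg_intertwine Tq Tq f g x)
      have htrE : LinearMap.trace ℂ V E = (Fintype.card G : ℂ) * LinearMap.trace ℂ V f := by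
        rw [hEdef, map_sum]
        have : ∀ g : G, LinearMap.trace ℂ V (Tq g ∘ₗ f ∘ₗ Tq g⁻¹) = LinearMap.trace ℂ V f := by
          intro g
          have h1 : Tq g ∘ₗ f ∘ₗ Tq g⁻¹ = Tq g * (f * Tq g⁻¹) := rfl
          rw [h1, LinearMap.trace_mul_comm, mul_assoc, ← map_mul, inv_mul_cancel, map_one,
            mul_one]
        simp only [this, Finset.sum_const, Finset.card_univ, nsmul_eq_mul]
      rw [hptr f h, hEscal, htrE]
      rw [TensorProduct.map_smul_left, TensorProduct.map_smul_left, TensorProduct.map_smul_right]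
      simp only [smul_smul]
      congr 1
      ring
    | add x y hx hy =>
      simp only [map_add, LinearMap.comp_add, LinearMap.add_comp, Finset.sum_add_distrib,
        hx, hy, TensorProduct.map_add_right, smul_add]
  have := key ((homTensorHomEquiv ℂ V W V W).symm S)
  rwa [LinearEquiv.apply_symm_apply] at this
theorem twirl_depolarizes_gauge_and_preserves_multiplicity
    {H : Type*} [NormedAddCommGroup H] [InnerProductSpace ℂ H] [FiniteDimensional ℂ H]
    {G : Type*} [Group G] [Fintype G]
    {Q : Type*} [Fintype Q] [DecidableEq Q]
    (M N : Q → Type*)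
    [∀ q, NormedAddCommGroup (M q)] [∀ q, InnerProductSpace ℂ (M q)]
    [∀ q, FiniteDimensional ℂ (M q)]
    [∀ q, NormedAddCommGroup (N q)] [∀ q, InnerProductSpace ℂ (N q)]
    [∀ q, FiniteDimensional ℂ (N q)]
    -- the inner product on M q ⊗ N q, sesquilinear with ⟪a⊗b, c⊗d⟫ = ⟪a,c⟫⟪b,d⟫
    (innerT : ∀ q, (M q ⊗[ℂ] N q) → (M q ⊗[ℂ] N q) → ℂ)
    (hinnerT_add_left : ∀ q (x x' y : M q ⊗[ℂ] N q),
      innerT q (x + x') y = innerT q x y + innerT q x' y)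
    (hinnerT_add_right : ∀ q (x y y' : M q ⊗[ℂ] N q),
      innerT q x (y + y') = innerT q x y + innerT q x y')
    (hinnerT_tmul : ∀ q (a c : M q) (b d : N q),
      innerT q (a ⊗ₜ[ℂ] b) (c ⊗ₜ[ℂ] d) = (inner ℂ a c : ℂ) * (inner ℂ b d : ℂ))
    -- the unitary representation T of G on H
    (T : G →* (H →ₗ[ℂ] H))
    (hT_unitary : ∀ g (x y : H), (inner ℂ (T g x) (T g y) : ℂ) = (inner ℂ x y : ℂ))
    -- the irreducible, pairwise non-isomorphic unitary representations T_q on M_q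
    (Tq : ∀ q, G →* (M q →ₗ[ℂ] M q))
    (hTq_unitary : ∀ q g (x y : M q), (inner ℂ (Tq q g x) (Tq q g y) : ℂ) = (inner ℂ x y : ℂ))
    (hTq_irreducible : ∀ q (W : Submodule ℂ (M q)),
      (∀ g, ∀ x ∈ W, Tq q g x ∈ W) → W = ⊥ ∨ W = ⊤)
    (hTq_pairwise_noniso : ∀ q q', q ≠ q' →
      ¬ ∃ e : M q ≃ₗ[ℂ] M q', ∀ g x, e (Tq q g x) = Tq q' g (e x))
    -- the unitary isomorphism Φ : H ≅ ⊕_q M_q ⊗ N_q intertwining T and ⊕_q T_q ⊗ I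
    (Φ : H ≃ₗ[ℂ] (∀ q, M q ⊗[ℂ] N q))
    (hΦ_unitary : ∀ x y : H, (inner ℂ x y : ℂ) = ∑ q, innerT q (Φ x q) (Φ y q))
    (hΦ_equivariant : ∀ g (x : H) (q : Q),
      Φ (T g x) q = TensorProduct.map (Tq q g) LinearMap.id (Φ x q))
    -- the partial trace over M q : the unique linear map with Tr_M[B ⊗ C] = (Tr B)·C
    (ptr : ∀ q, ((M q ⊗[ℂ] N q) →ₗ[ℂ] (M q ⊗[ℂ] N q)) →ₗ[ℂ] ((N q) →ₗ[ℂ] (N q)))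
    (hptr : ∀ q (B : M q →ₗ[ℂ] M q) (C : N q →ₗ[ℂ] N q),
      ptr q (TensorProduct.map B C) = (LinearMap.trace ℂ (M q) B) • C)
    (A : H →ₗ[ℂ] H) :
    ∀ (v : ∀ q, M q ⊗[ℂ] N q) (q : Q),
      Φ ((((Fintype.card G : ℂ))⁻¹ • ∑ g : G, T g * A * T g⁻¹) (Φ.symm v)) q
        = ((Module.finrank ℂ (M q) : ℂ))⁻¹ •
            TensorProduct.map LinearMap.id
              (ptr q ((LinearMap.proj q : (∀ q', M q' ⊗[ℂ] N q') →ₗ[ℂ] (M q ⊗[ℂ] N q)) ∘ₗ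
                (Φ.toLinearMap ∘ₗ A ∘ₗ Φ.symm.toLinearMap) ∘ₗ
                  LinearMap.single ℂ (fun q' => M q' ⊗[ℂ] N q') q))
              (v q) := by
  intro v q
  classical
  have hcard : ((Fintype.card G : ℂ)) ≠ 0 := by
    exact_mod_cast Nat.cast_ne_zero.mpr Fintype.card_ne_zero
  set B : (∀ q', M q' ⊗[ℂ] N q') →ₗ[ℂ] (∀ q', M q' ⊗[ℂ] N q') :=
    Φ.toLinearMap ∘ₗ A ∘ₗ Φ.symm.toLinearMap with hBdef
  set Sq : ∀ q' : Q, ((M q' ⊗[ℂ] N q') →ₗ[ℂ] (M q ⊗[ℂ] N q)) := fun q' =>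
    (LinearMap.proj q : (∀ q'', M q'' ⊗[ℂ] N q'') →ₗ[ℂ] (M q ⊗[ℂ] N q)) ∘ₗ
      B ∘ₗ LinearMap.single ℂ (fun q'' => M q'' ⊗[ℂ] N q'') q' with hSqdef
  have step1 : ∀ g : G, Φ ((T g * A * T g⁻¹) (Φ.symm v)) q
      = ∑ q', (TensorProduct.map (Tq q g) LinearMap.id ∘ₗ Sq q' ∘ₗ
          TensorProduct.map (Tq q' g⁻¹) LinearMap.id) (v q') := by
    intro g
    have hw : T g⁻¹ (Φ.symm v)
        = Φ.symm (fun q' => TensorProduct.map (Tq q' g⁻¹) LinearMap.id (v q')) := by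
      apply Φ.injective
      rw [LinearEquiv.apply_symm_apply]
      funext q'
      rw [hΦ_equivariant, LinearEquiv.apply_symm_apply]
    have h1 : (T g * A * T g⁻¹) (Φ.symm v) = T g (A (T g⁻¹ (Φ.symm v))) := rfl
    rw [h1, hw, hΦ_equivariant]
    set w : ∀ q', M q' ⊗[ℂ] N q' :=
      fun q' => TensorProduct.map (Tq q' g⁻¹) LinearMap.id (v q') with hwdef
    have h2 : Φ (A (Φ.symm w)) q = B w q := rfl
    have h3 : B w q = ∑ q', Sq q' (w q') := by
      conv_lhs => rw [← Finset.univ_sum_single w, map_sum]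
      rw [Finset.sum_apply]
      exact Finset.sum_congr rfl fun q' _ => rfl
    rw [h2, h3, map_sum]
    exact Finset.sum_congr rfl fun q' _ => rfl
  calc Φ ((((Fintype.card G : ℂ))⁻¹ • ∑ g : G, T g * A * T g⁻¹) (Φ.symm v)) q
      = ((Fintype.card G : ℂ))⁻¹ • ∑ g : G, Φ ((T g * A * T g⁻¹) (Φ.symm v)) q := by
        simp only [LinearMap.smul_apply, LinearMap.sum_apply, map_smul, map_sum,
          Pi.smul_apply, Finset.sum_apply]
    _ = ((Fintype.card G : ℂ))⁻¹ • ∑ q', (∑ g : G,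
          TensorProduct.map (Tq q g) LinearMap.id ∘ₗ Sq q' ∘ₗ
            TensorProduct.map (Tq q' g⁻¹) LinearMap.id) (v q') := by
        simp only [step1]
        rw [Finset.sum_comm]
        exact congrArg _ (Finset.sum_congr rfl fun q' _ => (LinearMap.sum_apply _ _ _).symm)
    _ = ((Fintype.card G : ℂ))⁻¹ • ((∑ g : G,
          TensorProduct.map (Tq q g) LinearMap.id ∘ₗ Sq q ∘ₗ
            TensorProduct.map (Tq q g⁻¹) LinearMap.id) (v q)) := by
        congr 1
        refine Finset.sum_eq_single q (fun q' _ hne => ?_)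
          (fun h => absurd (Finset.mem_univ q) h)
        rw [my_twirl_ne (Tq q) (Tq q') (hTq_irreducible q) (hTq_irreducible q')
          (hTq_pairwise_noniso q' q hne) (Sq q')]
        rfl
    _ = ((Module.finrank ℂ (M q) : ℂ))⁻¹ •
          TensorProduct.map LinearMap.id (ptr q (Sq q)) (v q) := by
        rw [my_twirl_eq (Tq q) (hTq_irreducible q) (ptr q) (hptr q) (Sq q)]
        rw [LinearMap.smul_apply, LinearMap.smul_apply, inv_smul_smul₀ hcard]
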